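/- arXiv:2112.10329 — 2 statements merged into one kernel-verified Lean document; each statement's English description precedes it below -/
import Mathlib

section
/- Let ρ < 0 and let k = k(n) be an intermediate sequence of positive integers, i.e., k → ∞ and k/n → 0 as n → ∞. Then g(k,n,ρ) := (k/n)^ρ Γ(n+1)Γ(k-ρ+1)/(Γ(n-ρ+1)Γ(k+1)) satisfies g(k,n,ρ) = 1 + (1/2)(ρ² - ρ)k^{-1} - (1/2)(ρ² - ρ)(n-ρ)^{-1} + O(k^{-2}) as n → ∞. In particular g(k,n,ρ) → 1. -/
open Real Filter Asymptotics

/-- The quantity `g(k, n, ρ) = (k/n)^ρ Γ(n+1)Γ(k-ρ+1)/(Γ(n-ρ+1)Γ(k+1))`. -/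
noncomputable def gFun (k n : ℕ) (ρ : ℝ) : ℝ :=
  ((k : ℝ) / n) ^ ρ * (Real.Gamma (n + 1) * Real.Gamma (k - ρ + 1)) /
    (Real.Gamma (n - ρ + 1) * Real.Gamma (k + 1))

open Topology

noncomputable def Fa (ρ x : ℝ) : ℝ :=
  Real.log (Real.Gamma (x + 1 - ρ)) - Real.log (Real.Gamma (x + 1)) + ρ * Real.log x


lemma gamma_ratio_tendsto_aux : ∀ n : ℕ, ∀ s : ℝ, 0 ≤ s → s ≤ n →
    Tendsto (fun u : ℝ => Real.Gamma (u + s) / (Real.Gamma u * u ^ s)) atTop (𝓝 1) := by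
  intro n
  induction n with
  | zero =>
    intro s hs hs'
    have hs0 : s = 0 := le_antisymm (by exact_mod_cast hs') hs
    subst hs0
    have : (fun _ : ℝ => (1:ℝ)) =ᶠ[atTop] fun u : ℝ => Real.Gamma (u + 0) / (Real.Gamma u * u ^ (0:ℝ)) := by
      filter_upwards [eventually_gt_atTop (0:ℝ)] with u hu
      rw [add_zero, Real.rpow_zero, mul_one, div_self (Real.Gamma_pos_of_pos hu).ne']
    exact Tendsto.congr' this tendsto_const_nhds
  | succ n ih =>
    intro s hs hsn
    rcases le_or_gt s n with h | h
    · exact ih s hs h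
    rcases le_or_gt s 1 with h1 | h1
    · -- base case: 0 < s ≤ 1
      have hs0 : 0 < s := lt_of_le_of_lt (Nat.cast_nonneg n) h
      rcases eq_or_lt_of_le h1 with rfl | h1
      · -- s = 1
        have : (fun _ : ℝ => (1:ℝ)) =ᶠ[atTop] fun u : ℝ => Real.Gamma (u + 1) / (Real.Gamma u * u ^ (1:ℝ)) := by
          filter_upwards [eventually_gt_atTop (0:ℝ)] with u hu
          rw [Real.Gamma_add_one hu.ne', Real.rpow_one, mul_comm u (Real.Gamma u),
            div_self (by positivity)]
        exact Tendsto.congr' this tendsto_const_nhds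
      · -- 0 < s < 1, squeeze
        have hlow : Tendsto (fun u : ℝ => (u / (u + s)) ^ (1 - s)) atTop (𝓝 1) := by
          have h2 : Tendsto (fun u : ℝ => u / (u + s)) atTop (𝓝 1) := by
            have h3 : Tendsto (fun u : ℝ => 1 - s / (u + s)) atTop (𝓝 (1 - 0)) :=
              tendsto_const_nhds.sub
                (tendsto_const_nhds.div_atTop (tendsto_atTop_add_const_right _ s tendsto_id))
            rw [sub_zero] at h3
            apply h3.congr'
            filter_upwards [eventually_gt_atTop (0:ℝ)] with u hu
            field_simp
            ring
          have hc : ContinuousAt (fun x : ℝ => x ^ (1 - s)) 1 :=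
            Real.continuousAt_rpow_const 1 (1 - s) (Or.inl one_ne_zero)
          have := hc.tendsto.comp h2
          simpa [Real.one_rpow, Function.comp_def] using this
        apply tendsto_of_tendsto_of_tendsto_of_le_of_le' hlow tendsto_const_nhds
        · -- lower bound
          filter_upwards [eventually_gt_atTop (0:ℝ)] with u hu
          have hΓu : 0 < Real.Gamma u := Real.Gamma_pos_of_pos hu
          have hΓus : 0 < Real.Gamma (u + s) := Real.Gamma_pos_of_pos (by linarith)
          have key : Real.Gamma (u + 1) ≤ Real.Gamma (u + s) * (u + s) ^ (1 - s) := by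
            have h4 := Real.Gamma_mul_add_mul_le_rpow_Gamma_mul_rpow_Gamma
              (s := u + s) (t := u + s + 1) (a := s) (b := 1 - s)
              (by linarith) (by linarith) hs0 (by linarith) (by ring)
            have harg : s * (u + s) + (1 - s) * (u + s + 1) = u + 1 := by ring
            rw [harg] at h4
            calc Real.Gamma (u + 1) ≤ Real.Gamma (u + s) ^ s * Real.Gamma (u + s + 1) ^ (1 - s) := h4
              _ = Real.Gamma (u + s) * (u + s) ^ (1 - s) := by
                  rw [Real.Gamma_add_one (by linarith : u + s ≠ 0),
                    Real.mul_rpow (by linarith) hΓus.le, ← mul_assoc,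
                    mul_comm (Real.Gamma (u+s) ^ s), mul_assoc, ← Real.rpow_add hΓus]
                  norm_num
                  ring
          rw [Real.Gamma_add_one hu.ne'] at key
          -- u * Γ u ≤ Γ(u+s) * (u+s)^(1-s)
          rw [Real.div_rpow hu.le (by linarith), div_le_div_iff₀ (by positivity) (by positivity)]
          calc u ^ (1-s) * (Real.Gamma u * u ^ s)
              = (u * Real.Gamma u) * u ^ (1-s) * u ^ s / u := by
                field_simp
            _ = (u * Real.Gamma u) * u / u := by
                rw [mul_assoc, ← Real.rpow_add hu]
                norm_num
            _ = u * Real.Gamma u := by field_simp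
            _ ≤ Real.Gamma (u + s) * (u + s) ^ (1 - s) := key
        · -- upper bound
          filter_upwards [eventually_gt_atTop (0:ℝ)] with u hu
          have hΓu : 0 < Real.Gamma u := Real.Gamma_pos_of_pos hu
          have h4 := Real.Gamma_mul_add_mul_le_rpow_Gamma_mul_rpow_Gamma
            (s := u) (t := u + 1) (a := 1 - s) (b := s)
            hu (by linarith) (by linarith) hs0 (by ring)
          have harg : (1 - s) * u + s * (u + 1) = u + s := by ring
          rw [harg] at h4
          have h5 : Real.Gamma u ^ (1-s) * Real.Gamma (u + 1) ^ s = Real.Gamma u * u ^ s := by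
            rw [Real.Gamma_add_one hu.ne', Real.mul_rpow hu.le hΓu.le,
              mul_comm (u ^ s), ← mul_assoc, ← Real.rpow_add hΓu]
            norm_num
          rw [h5] at h4
          rw [div_le_one (by positivity)]
          exact h4
    · -- inductive step: 1 < s ≤ n + 1
      have key := ih (s - 1) (by linarith) (by push_cast at hsn ⊢; linarith)
      have h6 : Tendsto (fun u : ℝ => (u + (s-1)) / u) atTop (𝓝 1) := by
        have h3 : Tendsto (fun u : ℝ => 1 + (s-1) / u) atTop (𝓝 (1 + 0)) :=
          tendsto_const_nhds.add (tendsto_const_nhds.div_atTop tendsto_id)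
        rw [add_zero] at h3
        apply h3.congr'
        filter_upwards [eventually_gt_atTop (0:ℝ)] with u hu
        field_simp
      have := key.mul h6
      rw [one_mul] at this
      apply this.congr'
      filter_upwards [eventually_gt_atTop (0:ℝ)] with u hu
      have hΓu : 0 < Real.Gamma u := Real.Gamma_pos_of_pos hu
      have h7 : Real.Gamma (u + s) = (u + (s - 1)) * Real.Gamma (u + (s-1)) := by
        rw [← Real.Gamma_add_one (by linarith : u + (s-1) ≠ 0)]
        ring_nf
      have h8 : u ^ s = u ^ (s - 1) * u := by
        rw [← Real.rpow_add_one hu.ne' (s - 1)]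
        norm_num
      rw [h7, h8]
      field_simp

lemma Fa_tendsto_zero {ρ : ℝ} (hρ : ρ < 0) : Tendsto (Fa ρ) atTop (𝓝 0) := by
  have hs : (0:ℝ) ≤ -ρ := by linarith
  have hratio : Tendsto (fun u : ℝ => Real.Gamma (u + -ρ) / (Real.Gamma u * u ^ (-ρ))) atTop (𝓝 1) :=
    gamma_ratio_tendsto_aux ⌈-ρ⌉₊ (-ρ) hs (Nat.le_ceil _)
  have h1 : Tendsto (fun y : ℝ =>
      Real.log (Real.Gamma (y + 1 + -ρ) / (Real.Gamma (y + 1) * (y + 1) ^ (-ρ)))) atTop (𝓝 0) := by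
    have := (Real.continuousAt_log one_ne_zero).tendsto.comp
      (hratio.comp (tendsto_atTop_add_const_right atTop (1:ℝ) tendsto_id))
    simpa [Function.comp_def] using this
  have h2 : Tendsto (fun y : ℝ => ρ * Real.log (y / (y + 1))) atTop (𝓝 (ρ * 0)) := by
    apply Tendsto.const_mul
    have hq : Tendsto (fun y : ℝ => y / (y + 1)) atTop (𝓝 1) := by
      have h3 : Tendsto (fun y : ℝ => 1 - 1 / (y + 1)) atTop (𝓝 (1 - 0)) :=
        tendsto_const_nhds.sub
          (tendsto_const_nhds.div_atTop (tendsto_atTop_add_const_right _ 1 tendsto_id))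
      rw [sub_zero] at h3
      apply h3.congr'
      filter_upwards [eventually_gt_atTop (0:ℝ)] with y hy
      field_simp
      ring
    have := (Real.continuousAt_log one_ne_zero).tendsto.comp hq
    simpa [Function.comp_def] using this
  have := h1.add h2
  rw [mul_zero, add_zero] at this
  apply this.congr'
  filter_upwards [eventually_gt_atTop (0:ℝ)] with y hy
  have hΓ1 : 0 < Real.Gamma (y + 1) := Real.Gamma_pos_of_pos (by linarith)
  have hΓ2 : 0 < Real.Gamma (y + 1 + -ρ) := Real.Gamma_pos_of_pos (by linarith)
  rw [Real.log_div hΓ2.ne' (by positivity), Real.log_mul hΓ1.ne' (by positivity),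
    Real.log_rpow (by linarith), Real.log_div hy.ne' (by linarith)]
  show _ = Fa ρ y
  unfold Fa
  have : y + 1 + -ρ = y + 1 - ρ := by ring
  rw [this]
  ring

lemma Fa_sub {ρ : ℝ} (hρ : ρ < 0) {y : ℝ} (hy : 0 < y) :
    Fa ρ y - Fa ρ (y + 1) =
      Real.log (y + 1) - Real.log (y + 1 - ρ) - ρ * (Real.log (y + 1) - Real.log y) := by
  unfold Fa
  have h1 : Real.Gamma (y + 1 + 1 - ρ) = (y + 1 - ρ) * Real.Gamma (y + 1 - ρ) := by
    rw [show y + 1 + 1 - ρ = (y + 1 - ρ) + 1 by ring, Real.Gamma_add_one (by linarith)]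
  have h2 : Real.Gamma (y + 1 + 1) = (y + 1) * Real.Gamma (y + 1) := by
    rw [show y + 1 + 1 = (y + 1) + 1 by ring, Real.Gamma_add_one (by linarith)]
  rw [h1, h2, Real.log_mul (by linarith) (Real.Gamma_pos_of_pos (by linarith)).ne',
    Real.log_mul (by linarith) (Real.Gamma_pos_of_pos (by linarith)).ne']
  ring

lemma taylor_log2 {x : ℝ} (hx : |x| ≤ 1/2) :
    |x + x^2/2 + Real.log (1 - x)| ≤ 2 * |x|^3 := by
  have h := abs_log_sub_add_sum_range_le (x := x) (by linarith [abs_nonneg x] : |x| < 1) 2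
  simp only [Finset.sum_range_succ, Finset.sum_range_zero] at h
  norm_num at h
  calc |x + x^2/2 + Real.log (1-x)| ≤ |x|^3 / (1 - |x|) := by
        convert h using 2
        try ring
    _ ≤ |x|^3 / (1/2) := by
        apply div_le_div_of_nonneg_left (by positivity) (by norm_num) (by linarith)
    _ = 2 * |x|^3 := by ring


set_option maxHeartbeats 2000000 in
lemma phi_bound {ρ : ℝ} (hρ : ρ < 0) {y : ℝ} (hy : 2 - 2*ρ ≤ y) :
    |Fa ρ y - Fa ρ (y+1) - (ρ^2 - ρ)/2 * (1/y - 1/(y+1))| ≤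
      (2*|ρ|^3 + 3*|ρ| + ρ^2) / y^3 := by
  have hy2 : (2:ℝ) ≤ y := by linarith
  have hy0 : (0:ℝ) < y := by linarith
  have hy1 : (0:ℝ) < y + 1 := by linarith
  have hyρ : (0:ℝ) < y + 1 - ρ := by linarith
  rw [Fa_sub hρ hy0]
  set a := Real.log (y+1) - Real.log (y+1-ρ) with ha
  set b := Real.log (y+1) - Real.log y with hb
  -- Term A
  set x := ρ/(y+1) with hxdef
  have hxabs : |x| = -ρ/(y+1) := by
    rw [hxdef, abs_div, abs_of_pos hy1, abs_of_neg hρ]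
  have hxhalf : |x| ≤ 1/2 := by
    rw [hxabs, div_le_iff₀ hy1]
    linarith
  have hA : |a - (x + x^2/2)| ≤ 2*|ρ|^3/y^3 := by
    have h1x : (1:ℝ) - x = (y+1-ρ)/(y+1) := by
      rw [hxdef]; field_simp
    have hlog : Real.log (1 - x) = -a := by
      rw [h1x, Real.log_div hyρ.ne' hy1.ne', ha]; ring
    have := taylor_log2 hxhalf
    rw [hlog] at this
    have h2 : |a - (x + x^2/2)| = |x + x^2/2 + -a| := by
      rw [abs_sub_comm]; ring_nf
    rw [h2]
    refine this.trans ?_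
    have hx3 : |x|^3 = (-ρ)^3/(y+1)^3 := by
      rw [hxabs, div_pow]
    rw [hx3, abs_of_neg hρ, mul_div_assoc]
    gcongr
    · nlinarith [pow_pos (neg_pos.mpr hρ) 3]
    · nlinarith
  -- Term B
  set x' := -(1/y) with hx'def
  have hx'abs : |x'| = 1/y := by
    rw [hx'def, abs_neg, abs_of_pos (by positivity)]
  have hx'half : |x'| ≤ 1/2 := by
    rw [hx'abs, div_le_iff₀ hy0]; linarith
  have hB : |b - (1/y - 1/(2*y^2))| ≤ 2/y^3 := by
    have h1x : (1:ℝ) - x' = (y+1)/y := by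
      rw [hx'def]; field_simp; ring
    have hlog : Real.log (1 - x') = b := by
      rw [h1x, Real.log_div hy1.ne' hy0.ne', hb]
    have := taylor_log2 hx'half
    rw [hlog] at this
    have h2 : x' + x'^2/2 + b = b - (1/y - 1/(2*y^2)) := by
      rw [hx'def]; field_simp; ring
    rw [h2] at this
    refine this.trans ?_
    rw [hx'abs, div_pow, one_pow, mul_one_div]
  -- E term
  have hE : (x + x^2/2) - ρ*(1/y - 1/(2*y^2)) - (ρ^2-ρ)/2*(1/y - 1/(y+1))
      = -(ρ^2/(2*y*(y+1)^2)) + ρ/(2*y^2*(y+1)) := by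
    rw [hxdef]; field_simp; ring
  have hEbound : |(x + x^2/2) - ρ*(1/y - 1/(2*y^2)) - (ρ^2-ρ)/2*(1/y - 1/(y+1))|
      ≤ (ρ^2 + |ρ|)/y^3 := by
    rw [hE]
    refine (abs_add_le _ _).trans ?_
    have hρ2 : (0:ℝ) < ρ^2 := by nlinarith
    rw [abs_neg, abs_of_pos (by have hρ0 : ρ ≠ 0 := ne_of_lt hρ; positivity : (0:ℝ) < ρ^2/(2*y*(y+1)^2)),
      abs_of_neg (div_neg_of_neg_of_pos hρ (by positivity)), abs_of_neg hρ, ← neg_div, add_div]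
    gcongr
    · nlinarith
    · linarith
    · nlinarith
  clear_value a b x x'
  -- assemble
  have hsplit : a - ρ*b - (ρ^2-ρ)/2*(1/y - 1/(y+1)) =
      (a - (x + x^2/2)) - ρ*(b - (1/y - 1/(2*y^2)))
        + ((x + x^2/2) - ρ*(1/y - 1/(2*y^2)) - (ρ^2-ρ)/2*(1/y - 1/(y+1))) := by ring
  calc |a - ρ*b - (ρ^2-ρ)/2*(1/y - 1/(y+1))|
      ≤ |(a - (x + x^2/2)) - ρ*(b - (1/y - 1/(2*y^2)))|
        + |(x + x^2/2) - ρ*(1/y - 1/(2*y^2)) - (ρ^2-ρ)/2*(1/y - 1/(y+1))| := by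
        rw [hsplit]; exact abs_add_le _ _
    _ ≤ (|a - (x + x^2/2)| + |ρ| * |b - (1/y - 1/(2*y^2))|)
        + |(x + x^2/2) - ρ*(1/y - 1/(2*y^2)) - (ρ^2-ρ)/2*(1/y - 1/(y+1))| := by
        gcongr
        refine (abs_sub _ _).trans ?_
        rw [abs_mul]
    _ ≤ (2*|ρ|^3/y^3 + |ρ| * (2/y^3)) + (ρ^2 + |ρ|)/y^3 :=
        add_le_add (add_le_add hA (mul_le_mul_of_nonneg_left hB (abs_nonneg ρ))) hEbound
    _ = (2*|ρ|^3 + 3*|ρ| + ρ^2) / y^3 := by ring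

lemma Fa_est {ρ : ℝ} (hρ : ρ < 0) {x : ℝ} (hx : 2 - 2*ρ ≤ x) :
    |Fa ρ x - (ρ^2 - ρ)/2 * (1/x)| ≤ (2*(2*|ρ|^3 + 3*|ρ| + ρ^2)) / x^2 := by
  set C : ℝ := 2*|ρ|^3 + 3*|ρ| + ρ^2 with hC
  have hC0 : 0 ≤ C := by positivity
  have hx2 : (2:ℝ) ≤ x := by linarith
  have hx0 : (0:ℝ) < x := by linarith
  -- uniform-in-m bound
  have key : ∀ m : ℕ, |Fa ρ x - Fa ρ (x + m) - (ρ^2 - ρ)/2 * (1/x - 1/(x + m))| ≤ 2*C/x^2 := by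
    intro m
    have htel1 : Fa ρ x - Fa ρ (x + m) =
        ∑ j ∈ Finset.range m, (Fa ρ (x + j) - Fa ρ (x + j + 1)) := by
      have := Finset.sum_range_sub' (fun j : ℕ => Fa ρ (x + j)) m
      simp only [Nat.cast_zero, add_zero] at this
      rw [← this]
      apply Finset.sum_congr rfl
      intro j _
      push_cast
      ring_nf
    have htel2 : (1/x - 1/(x + m)) =
        ∑ j ∈ Finset.range m, (1/(x + j) - 1/(x + j + 1)) := by
      have := Finset.sum_range_sub' (fun j : ℕ => 1/(x + j)) m
      simp only [Nat.cast_zero, add_zero] at this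
      rw [← this]
      apply Finset.sum_congr rfl
      intro j _
      push_cast
      ring_nf
    rw [htel1, htel2, Finset.mul_sum, ← Finset.sum_sub_distrib]
    refine (Finset.abs_sum_le_sum_abs _ _).trans ?_
    have hterm : ∀ j ∈ Finset.range m,
        |Fa ρ (x + j) - Fa ρ (x + j + 1) - (ρ^2 - ρ)/2 * (1/(x + j) - 1/(x + j + 1))|
          ≤ C * (1/((x + j - 1)*(x + j)) - 1/((x + j)*(x + j + 1))) := by
      intro j _
      have hj0 : (0:ℝ) ≤ j := Nat.cast_nonneg j
      have hyj : 2 - 2*ρ ≤ x + j := by linarith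
      refine (phi_bound hρ hyj).trans ?_
      have h1 : (0:ℝ) < x + j := by linarith
      have h2 : (0:ℝ) < x + j - 1 := by linarith
      have h3 : (0:ℝ) < x + j + 1 := by linarith
      have heq : 1/((x + j - 1)*(x + j)) - 1/((x + j)*(x + j + 1))
          = 2 / ((x + j - 1)*(x + j)*(x + j + 1)) := by
        field_simp
        ring
      rw [heq, mul_div_assoc']
      rw [div_le_div_iff₀ (by positivity) (by positivity), hC]
      have hcube : (x + j - 1)*(x + j)*(x + j + 1) ≤ (x + j)^3 := by nlinarith
      nlinarith [abs_nonneg ρ, pow_nonneg (abs_nonneg ρ) 3, sq_nonneg ρ,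
        mul_pos (mul_pos h2 h1) h3]
    refine (Finset.sum_le_sum hterm).trans ?_
    rw [← Finset.mul_sum]
    have htel3 : ∑ j ∈ Finset.range m, (1/((x + j - 1)*(x + j)) - 1/((x + j)*(x + j + 1)))
        = 1/((x - 1)*x) - 1/((x + m - 1)*(x + m)) := by
      have := Finset.sum_range_sub' (fun j : ℕ => 1/((x + j - 1)*(x + j))) m
      simp only [Nat.cast_zero, add_zero] at this
      rw [← this]
      apply Finset.sum_congr rfl
      intro j _
      push_cast
      ring_nf
    rw [htel3]
    have hm0 : (0:ℝ) ≤ m := Nat.cast_nonneg m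
    have h4 : (0:ℝ) < (x + m - 1)*(x + m) := by nlinarith
    have h5 : 1/((x - 1)*x) - 1/((x + m - 1)*(x + m)) ≤ 2/x^2 := by
      have h6 : (0:ℝ) < 1/((x + m - 1)*(x + m)) := by positivity
      have h7 : 1/((x - 1)*x) ≤ 2/x^2 := by
        rw [div_le_div_iff₀ (by nlinarith) (by positivity)]
        nlinarith
      linarith
    calc C * (1/((x - 1)*x) - 1/((x + m - 1)*(x + m))) ≤ C * (2/x^2) := by
          exact mul_le_mul_of_nonneg_left h5 hC0
      _ = 2*C/x^2 := by ring
  -- take the limit m → ∞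
  have hlim : Tendsto (fun m : ℕ => Fa ρ x - Fa ρ (x + m) - (ρ^2 - ρ)/2 * (1/x - 1/(x + m)))
      atTop (𝓝 (Fa ρ x - 0 - (ρ^2 - ρ)/2 * (1/x - 0))) := by
    have hxm : Tendsto (fun m : ℕ => x + (m:ℝ)) atTop atTop :=
      tendsto_atTop_add_const_left _ x tendsto_natCast_atTop_atTop
    have h1 : Tendsto (fun m : ℕ => Fa ρ (x + m)) atTop (𝓝 0) :=
      (Fa_tendsto_zero hρ).comp hxm
    have h2 : Tendsto (fun m : ℕ => 1/(x + (m:ℝ))) atTop (𝓝 0) := by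
      simpa [one_div, Pi.inv_def] using hxm.inv_tendsto_atTop
    exact (tendsto_const_nhds.sub h1).sub (tendsto_const_nhds.mul (tendsto_const_nhds.sub h2))
  rw [sub_zero, sub_zero] at hlim
  have := le_of_tendsto hlim.abs (Eventually.of_forall key)
  exact this

lemma gFun_eq {ρ : ℝ} (hρ : ρ < 0) {k n : ℕ} (hk : 0 < k) (hn : 0 < n) :
    gFun k n ρ = Real.exp (Fa ρ k - Fa ρ n) := by
  have hk0 : (0:ℝ) < k := by exact_mod_cast hk
  have hn0 : (0:ℝ) < n := by exact_mod_cast hn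
  have hΓ1 : (0:ℝ) < Real.Gamma ((n:ℝ) + 1) := Real.Gamma_pos_of_pos (by linarith)
  have hΓ2 : (0:ℝ) < Real.Gamma ((k:ℝ) + 1 - ρ) := Real.Gamma_pos_of_pos (by linarith)
  have hΓ3 : (0:ℝ) < Real.Gamma ((n:ℝ) + 1 - ρ) := Real.Gamma_pos_of_pos (by linarith)
  have hΓ4 : (0:ℝ) < Real.Gamma ((k:ℝ) + 1) := Real.Gamma_pos_of_pos (by linarith)
  unfold gFun Fa
  rw [show (k:ℝ) - ρ + 1 = (k:ℝ) + 1 - ρ by ring, show (n:ℝ) - ρ + 1 = (n:ℝ) + 1 - ρ by ring]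
  rw [Real.rpow_def_of_pos (div_pos hk0 hn0), Real.log_div hk0.ne' hn0.ne']
  rw [← Real.exp_log hΓ1, ← Real.exp_log hΓ2, ← Real.exp_log hΓ3, ← Real.exp_log hΓ4]
  rw [← Real.exp_add, ← Real.exp_add, ← Real.exp_add, ← Real.exp_sub, Real.exp_eq_exp]
  simp only [Real.log_exp]
  ring


set_option maxHeartbeats 1000000 in
/-- For `ρ < 0` and an intermediate sequence `k = k(n)` (`k → ∞`,
`k/n → 0`), `g(k,n,ρ) = 1 + (ρ²-ρ)/(2k) - (ρ²-ρ)/(2(n-ρ)) + O(k^{-2})` as `n → ∞`;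
in particular `g(k,n,ρ) → 1`. -/
theorem gFun_expansion_intermediate (ρ : ℝ) (hρ : ρ < 0) (k : ℕ → ℕ)
    (hk : Tendsto k atTop atTop)
    (hkn : Tendsto (fun n : ℕ => (k n : ℝ) / n) atTop (nhds 0)) :
    ((fun n : ℕ => gFun (k n) n ρ -
        (1 + (1 / 2) * (ρ ^ 2 - ρ) * (k n : ℝ)⁻¹ - (1 / 2) * (ρ ^ 2 - ρ) * ((n : ℝ) - ρ)⁻¹))
      =O[atTop] fun n : ℕ => (1 : ℝ) / (k n : ℝ) ^ 2) ∧
    Tendsto (fun n : ℕ => gFun (k n) n ρ) atTop (nhds 1) := by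
  set c : ℝ := (ρ^2 - ρ)/2 with hc
  set C2 : ℝ := 2*(2*|ρ|^3 + 3*|ρ| + ρ^2) with hC2
  set C3 : ℝ := 2*|c| + 2*C2 with hC3
  have hC2nn : 0 ≤ C2 := by positivity
  have hC3nn : 0 ≤ C3 := by positivity
  have hkR : Tendsto (fun n : ℕ => (k n : ℝ)) atTop atTop :=
    tendsto_natCast_atTop_atTop.comp hk
  have hnR : Tendsto (fun n : ℕ => (n : ℝ)) atTop atTop := tendsto_natCast_atTop_atTop
  have ev1 : ∀ᶠ n : ℕ in atTop, 2 - 2*ρ ≤ (k n : ℝ) := hkR.eventually_ge_atTop _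
  have ev2 : ∀ᶠ n : ℕ in atTop, 2 - 2*ρ ≤ (n : ℝ) := hnR.eventually_ge_atTop _
  have ev4 : ∀ᶠ n : ℕ in atTop, C3 ≤ (k n : ℝ) := hkR.eventually_ge_atTop _
  have ev3 : ∀ᶠ n : ℕ in atTop, (k n : ℝ) ≤ (n : ℝ) := by
    have evh : ∀ᶠ n : ℕ in atTop, (k n : ℝ) / n ≤ 1/2 :=
      hkn.eventually (eventually_le_nhds (by norm_num : (0:ℝ) < 1/2))
    filter_upwards [evh, ev2] with n h1 h2
    have hn0 : (0:ℝ) < n := by linarith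
    rw [div_le_iff₀ hn0] at h1
    nlinarith
  -- eventual formula and |u| bound
  have evu : ∀ᶠ n : ℕ in atTop,
      gFun (k n) n ρ = Real.exp (Fa ρ (k n) - Fa ρ n) ∧
      |Fa ρ (k n) - Fa ρ n| ≤ C3 / (k n : ℝ) ∧
      |Fa ρ (k n) - Fa ρ n - (c/(k n : ℝ) - c/(n:ℝ))| ≤ 2*C2/(k n : ℝ)^2 := by
    filter_upwards [ev1, ev2, ev3] with n h1 h2 h3
    have hK0 : (0:ℝ) < k n := by linarith
    have hN0 : (0:ℝ) < n := by linarith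
    have hK1 : (1:ℝ) ≤ k n := by linarith
    have hgeq := gFun_eq hρ (k := k n) (n := n) (by exact_mod_cast hK0) (by exact_mod_cast hN0)
    refine ⟨hgeq, ?_, ?_⟩
    · -- |u| bound
      have hFk := Fa_est hρ h1
      have hFn := Fa_est hρ h2
      have hNK : C2/(n:ℝ)^2 ≤ C2/(k n : ℝ)^2 := by gcongr
      have h5 : |Fa ρ (k n) - Fa ρ n| ≤ |Fa ρ (k n) - c * (1/(k n:ℝ))| + |Fa ρ n - c * (1/(n:ℝ))|
          + |c * (1/(k n:ℝ))| + |c * (1/(n:ℝ))| := by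
        have : Fa ρ (k n) - Fa ρ n = (Fa ρ (k n) - c * (1/(k n:ℝ))) - (Fa ρ n - c * (1/(n:ℝ)))
            + c * (1/(k n:ℝ)) - c * (1/(n:ℝ)) := by ring
        rw [this]
        calc |_ + c * (1/(k n:ℝ)) - c * (1/(n:ℝ))|
            ≤ |_ + c * (1/(k n:ℝ))| + |c * (1/(n:ℝ))| := abs_sub _ _
          _ ≤ |_| + |c * (1/(k n:ℝ))| + |c * (1/(n:ℝ))| := by
              gcongr
              exact abs_add_le _ _
          _ ≤ _ := by
              have := abs_sub (Fa ρ (k n) - c * (1/(k n:ℝ))) (Fa ρ n - c * (1/(n:ℝ)))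
              gcongr
      refine h5.trans ?_
      have e1 : |c * (1/(k n:ℝ))| = |c|/(k n:ℝ) := by
        rw [abs_mul, abs_of_pos (by positivity : (0:ℝ) < 1/(k n:ℝ))]; ring
      have e2 : |c * (1/(n:ℝ))| = |c|/(n:ℝ) := by
        rw [abs_mul, abs_of_pos (by positivity : (0:ℝ) < 1/(n:ℝ))]; ring
      rw [e1, e2]
      have b1 : |Fa ρ (k n) - c * (1/(k n:ℝ))| ≤ C2/(k n:ℝ)^2 := hFk
      have b2 : |Fa ρ n - c * (1/(n:ℝ))| ≤ C2/(k n:ℝ)^2 := hFn.trans hNK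
      have b3 : C2/(k n:ℝ)^2 ≤ C2/(k n:ℝ) := by
        gcongr
        nlinarith
      have b4 : |c|/(n:ℝ) ≤ |c|/(k n:ℝ) := by gcongr
      calc |Fa ρ (k n) - c * (1/(k n:ℝ))| + |Fa ρ n - c * (1/(n:ℝ))| + |c|/(k n:ℝ) + |c|/(n:ℝ)
          ≤ C2/(k n:ℝ) + C2/(k n:ℝ) + |c|/(k n:ℝ) + |c|/(k n:ℝ) := by
            have := (hFk.trans b3)
            have := ((hFn.trans hNK).trans b3)
            linarith
        _ = C3/(k n:ℝ) := by rw [hC3]; ring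
    · -- second bound
      have hFk := Fa_est hρ h1
      have hFn := Fa_est hρ h2
      have hNK : C2/(n:ℝ)^2 ≤ C2/(k n : ℝ)^2 := by gcongr
      have hsplit : Fa ρ (k n) - Fa ρ n - (c/(k n : ℝ) - c/(n:ℝ))
          = (Fa ρ (k n) - c * (1/(k n:ℝ))) - (Fa ρ n - c * (1/(n:ℝ))) := by ring
      rw [hsplit]
      calc |_| ≤ |Fa ρ (k n) - c * (1/(k n:ℝ))| + |Fa ρ n - c * (1/(n:ℝ))| := abs_sub _ _
        _ ≤ C2/(k n:ℝ)^2 + C2/(k n:ℝ)^2 := add_le_add hFk (hFn.trans hNK)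
        _ = 2*C2/(k n:ℝ)^2 := by ring
  -- Tendsto part
  have hC3K : Tendsto (fun n : ℕ => C3/(k n:ℝ)) atTop (𝓝 0) :=
    tendsto_const_nhds.div_atTop hkR
  have hu0 : Tendsto (fun n : ℕ => Fa ρ (k n) - Fa ρ n) atTop (𝓝 0) := by
    apply squeeze_zero_norm' ?_ hC3K
    filter_upwards [evu] with n hn
    simpa [Real.norm_eq_abs] using hn.2.1
  have htend : Tendsto (fun n : ℕ => gFun (k n) n ρ) atTop (𝓝 1) := by
    have := (Real.continuous_exp.tendsto 0).comp hu0
    rw [Real.exp_zero] at this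
    apply this.congr'
    filter_upwards [evu] with n hn
    exact hn.1.symm
  refine ⟨?_, htend⟩
  -- IsBigO part
  rw [isBigO_iff]
  refine ⟨C3^2 + 2*C2 + |c| * (-ρ), ?_⟩
  filter_upwards [evu, ev1, ev2, ev3, ev4] with n hev h1 h2 h3 h4
  obtain ⟨hgeq, hub, hb2⟩ := hev
  have hK0 : (0:ℝ) < (k n : ℝ) := by linarith
  have hN0 : (0:ℝ) < (n : ℝ) := by linarith
  have hNρ : (0:ℝ) < (n:ℝ) - ρ := by linarith
  have hu1 : |Fa ρ (k n) - Fa ρ n| ≤ 1 := by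
    refine hub.trans ?_
    rw [div_le_one hK0]; exact h4
  have hexp : |Real.exp (Fa ρ (k n) - Fa ρ n) - 1 - (Fa ρ (k n) - Fa ρ n)|
      ≤ (Fa ρ (k n) - Fa ρ n)^2 := Real.abs_exp_sub_one_sub_id_le hu1
  have hu2 : (Fa ρ (k n) - Fa ρ n)^2 ≤ C3^2/(k n:ℝ)^2 := by
    have := pow_le_pow_left₀ (abs_nonneg (Fa ρ (k n) - Fa ρ n)) hub 2
    rw [sq_abs, div_pow] at this
    exact this
  have hterm3 : |c * ((n:ℝ) - ρ)⁻¹ - c * ((n:ℝ))⁻¹| ≤ |c| * (-ρ) / (k n:ℝ)^2 := by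
    have hid : c * ((n:ℝ) - ρ)⁻¹ - c * ((n:ℝ))⁻¹ = c * ρ / ((n:ℝ) * ((n:ℝ) - ρ)) := by
      field_simp
      ring
    rw [hid, abs_div, abs_mul, abs_of_neg hρ, abs_of_pos (by positivity : (0:ℝ) < (n:ℝ) * ((n:ℝ) - ρ))]
    gcongr
    · exact mul_nonneg (abs_nonneg c) (by linarith)
    · nlinarith
  have hdecomp : gFun (k n) n ρ -
      (1 + (1/2)*(ρ^2-ρ)*(k n:ℝ)⁻¹ - (1/2)*(ρ^2-ρ)*((n:ℝ)-ρ)⁻¹)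
      = (Real.exp (Fa ρ (k n) - Fa ρ n) - 1 - (Fa ρ (k n) - Fa ρ n))
        + (Fa ρ (k n) - Fa ρ n - (c/(k n:ℝ) - c/(n:ℝ)))
        + (c * ((n:ℝ) - ρ)⁻¹ - c * ((n:ℝ))⁻¹) := by
    rw [hgeq, hc]
    ring
  rw [Real.norm_eq_abs, Real.norm_eq_abs, hdecomp]
  have habs : |(Real.exp (Fa ρ (k n) - Fa ρ n) - 1 - (Fa ρ (k n) - Fa ρ n))
        + (Fa ρ (k n) - Fa ρ n - (c/(k n:ℝ) - c/(n:ℝ)))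
        + (c * ((n:ℝ) - ρ)⁻¹ - c * ((n:ℝ))⁻¹)|
      ≤ (Fa ρ (k n) - Fa ρ n)^2 + 2*C2/(k n:ℝ)^2 + |c| * (-ρ) / (k n:ℝ)^2 := by
    refine (abs_add_le _ _).trans ?_
    refine add_le_add (((abs_add_le _ _).trans (add_le_add hexp hb2))) hterm3
  refine habs.trans ?_
  rw [abs_of_pos (by positivity : (0:ℝ) < 1/(k n:ℝ)^2)]
  calc (Fa ρ (k n) - Fa ρ n)^2 + 2*C2/(k n:ℝ)^2 + |c| * (-ρ) / (k n:ℝ)^2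
      ≤ C3^2/(k n:ℝ)^2 + 2*C2/(k n:ℝ)^2 + |c| * (-ρ) / (k n:ℝ)^2 := by linarith
    _ = (C3^2 + 2*C2 + |c| * (-ρ)) * (1/(k n:ℝ)^2) := by ring
end

section
/- Let ρ < 0 and for intermediate sequences k define g(k,n,ρ) = (k/n)^ρ Γ(n+1)Γ(k-ρ+1)/(Γ(n-ρ+1)Γ(k+1)). Then g(k,n,2ρ) - (g(k,n,ρ))² = ρ²/k + o(1/k) as n → ∞ (with k → ∞, k/n → 0). -/
open Real Filter Asymptotics

open Topology

namespace GVarAux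

noncomputable def aF (ρ : ℝ) (m : ℕ) : ℝ :=
  Real.Gamma (m + 1) / ((m : ℝ) ^ ρ * Real.Gamma ((m : ℝ) - ρ + 1))

noncomputable def dF (ρ : ℝ) (j : ℕ) : ℝ :=
  Real.log (((j : ℝ) + 1) / ((j : ℝ) + 1 - ρ)) + ρ * Real.log ((j : ℝ) / ((j : ℝ) + 1))

lemma aF_pos {ρ : ℝ} (hρ : ρ < 0) {m : ℕ} (hm : 1 ≤ m) : 0 < aF ρ m := by
  have hm' : (0:ℝ) < m := by exact_mod_cast hm
  exact div_pos (Real.Gamma_pos_of_pos (by positivity))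
    (mul_pos (Real.rpow_pos_of_pos hm' ρ) (Real.Gamma_pos_of_pos (by linarith)))

lemma aF_succ {ρ : ℝ} (hρ : ρ < 0) {m : ℕ} (hm : 1 ≤ m) :
    aF ρ (m+1) = aF ρ m * ((((m:ℝ) + 1) / ((m:ℝ) + 1 - ρ)) * ((m:ℝ) / ((m:ℝ)+1)) ^ ρ) := by
  have hm' : (0:ℝ) < m := by exact_mod_cast hm
  have h1 : Real.Gamma (((m+1:ℕ):ℝ) + 1) = ((m:ℝ)+1) * Real.Gamma ((m:ℝ)+1) := by
    push_cast
    rw [Real.Gamma_add_one (by positivity)]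
  have h2 : Real.Gamma (((m+1:ℕ):ℝ) - ρ + 1) = ((m:ℝ)+1-ρ) * Real.Gamma ((m:ℝ)-ρ+1) := by
    push_cast
    have h : (m:ℝ) + 1 - ρ + 1 = ((m:ℝ) - ρ + 1) + 1 := by ring
    rw [h, Real.Gamma_add_one (ne_of_gt (by linarith))]
    ring_nf
  have h3 : (((m+1:ℕ):ℝ)) ^ ρ = ((m:ℝ)+1) ^ ρ := by push_cast; rfl
  have h4 : ((m:ℝ) / ((m:ℝ)+1)) ^ ρ = (m:ℝ) ^ ρ / ((m:ℝ)+1) ^ ρ :=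
    Real.div_rpow hm'.le (by positivity : (0:ℝ) ≤ (m:ℝ)+1) ρ
  rw [aF, aF, h1, h2, h3, h4]
  have hGpos : Real.Gamma ((m:ℝ)-ρ+1) ≠ 0 := ne_of_gt (Real.Gamma_pos_of_pos (by linarith))
  have hr1 : ((m:ℝ)) ^ ρ ≠ 0 := ne_of_gt (Real.rpow_pos_of_pos hm' ρ)
  have hr2 : (((m:ℝ)+1)) ^ ρ ≠ 0 := ne_of_gt (Real.rpow_pos_of_pos (by positivity) ρ)
  have hne : (m:ℝ) + 1 - ρ ≠ 0 := ne_of_gt (by linarith)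
  field_simp

lemma log_aF_succ {ρ : ℝ} (hρ : ρ < 0) {m : ℕ} (hm : 1 ≤ m) :
    Real.log (aF ρ (m+1)) = Real.log (aF ρ m) + dF ρ m := by
  have hm' : (0:ℝ) < m := by exact_mod_cast hm
  have hA : (0:ℝ) < ((m:ℝ) + 1) / ((m:ℝ) + 1 - ρ) := by
    apply div_pos <;> linarith
  have hB : (0:ℝ) < ((m:ℝ) / ((m:ℝ)+1)) ^ ρ := Real.rpow_pos_of_pos (by positivity) ρ
  rw [aF_succ hρ hm, Real.log_mul (ne_of_gt (aF_pos hρ hm)) (by positivity),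
    Real.log_mul (ne_of_gt hA) (ne_of_gt hB), Real.log_rpow (by positivity), dF]


lemma Gamma_prod {s : ℝ} (hs : 0 < s) (n : ℕ) :
    Real.Gamma (s + n + 1) = Real.Gamma s * ∏ j ∈ Finset.range (n+1), (s + j) := by
  induction n with
  | zero => simp [Real.Gamma_add_one (ne_of_gt hs), mul_comm]
  | succ n ih =>
    rw [Finset.prod_range_succ, ← mul_assoc, ← ih]
    have h : s + ((n:ℕ)+1:ℕ) + 1 = (s + n + 1) + 1 := by push_cast; ring
    rw [h, Real.Gamma_add_one (ne_of_gt (by positivity))]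
    push_cast; ring

lemma aF_eq_gammaSeq {ρ : ℝ} (hρ : ρ < 0) {n : ℕ} (hn : 1 ≤ n) :
    aF ρ n = Real.GammaSeq (-ρ) n / Real.Gamma (-ρ) := by
  have hs : 0 < -ρ := neg_pos.2 hρ
  have hn' : (0:ℝ) < n := by exact_mod_cast hn
  rw [Real.GammaSeq]
  have hGs : Real.Gamma (-ρ) ≠ 0 := ne_of_gt (Real.Gamma_pos_of_pos hs)
  have hprod : ∏ j ∈ Finset.range (n+1), (-ρ + (j:ℝ))
      = Real.Gamma ((n:ℝ) - ρ + 1) / Real.Gamma (-ρ) := by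
    have hp := Gamma_prod hs n
    have h2 : (-ρ) + (n:ℝ) + 1 = (n:ℝ) - ρ + 1 := by ring
    rw [h2] at hp
    rw [hp]; field_simp
  rw [hprod]
  have h1 : Real.Gamma ((n:ℝ) + 1) = ((Nat.factorial n : ℕ) : ℝ) := by
    rw [Real.Gamma_nat_eq_factorial]  -- check name
  rw [aF, h1]
  have hG : Real.Gamma ((n:ℝ) - ρ + 1) ≠ 0 := ne_of_gt (Real.Gamma_pos_of_pos (by linarith))
  have hrr : ((n:ℝ)) ^ ρ ≠ 0 := ne_of_gt (Real.rpow_pos_of_pos hn' ρ)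
  have hrs : ((n:ℝ)) ^ (-ρ) = ((n:ℝ) ^ ρ)⁻¹ := by
    rw [Real.rpow_neg hn'.le]
  rw [hrs]
  field_simp

lemma aF_tendsto_one {ρ : ℝ} (hρ : ρ < 0) : Tendsto (aF ρ) atTop (𝓝 1) := by
  have hs : 0 < -ρ := neg_pos.2 hρ
  have hGs : Real.Gamma (-ρ) ≠ 0 := ne_of_gt (Real.Gamma_pos_of_pos hs)
  have h := (Real.GammaSeq_tendsto_Gamma (-ρ)).div_const (Real.Gamma (-ρ))
  rw [div_self hGs] at h
  apply h.congr'
  filter_upwards [eventually_ge_atTop 1] with n hn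
  exact (aF_eq_gammaSeq hρ hn).symm

lemma log_aF_tendsto_zero {ρ : ℝ} (hρ : ρ < 0) :
    Tendsto (fun m : ℕ => Real.log (aF ρ m)) atTop (𝓝 0) := by
  have := (Real.continuousAt_log one_ne_zero).tendsto.comp (aF_tendsto_one hρ)
  rw [Real.log_one] at this
  exact this


noncomputable def eL (x : ℝ) : ℝ := Real.log (1 - x) + x + x ^ 2 / 2

lemma eL_bound {x : ℝ} (h : |x| ≤ 1/2) : |eL x| ≤ 2 * |x| ^ 3 := by
  have h1 : |x| < 1 := lt_of_le_of_lt h (by norm_num)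
  have := Real.abs_log_sub_add_sum_range_le h1 2
  have hsum : (∑ i ∈ Finset.range 2, x ^ (i+1) / (i+1)) = x + x ^ 2 / 2 := by
    simp [Finset.sum_range_succ]
    ring
  rw [hsum] at this
  have h2 : |x| ^ 3 / (1 - |x|) ≤ 2 * |x| ^ 3 := by
    rw [div_le_iff₀ (by linarith)]
    nlinarith [abs_nonneg x, pow_nonneg (abs_nonneg x) 3]
  calc |eL x| = |(x + x^2/2) + Real.log (1-x)| := by rw [eL]; ring_nf
    _ ≤ |x| ^ 3 / (1 - |x|) := this
    _ ≤ 2 * |x| ^ 3 := h2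

lemma dF_eq {ρ : ℝ} (hρ : ρ < 0) {j : ℕ} (hj : 1 ≤ j) :
    dF ρ j = (ρ^2 - ρ)/2 * (1 / ((j:ℝ)+1)^2)
      - eL (ρ / ((j:ℝ)+1)) + ρ * eL (1 / ((j:ℝ)+1)) := by
  have hj' : (0:ℝ) < j := by exact_mod_cast hj
  have ht : (0:ℝ) < (j:ℝ) + 1 := by linarith
  have htρ : (0:ℝ) < (j:ℝ) + 1 - ρ := by linarith
  have e1 : (1 : ℝ) - ρ / ((j:ℝ)+1) = ((j:ℝ) + 1 - ρ) / ((j:ℝ)+1) := by field_simp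
  have e2 : (1 : ℝ) - 1 / ((j:ℝ)+1) = (j:ℝ) / ((j:ℝ)+1) := by field_simp; ring
  have l1 : Real.log (((j:ℝ)+1) / ((j:ℝ)+1-ρ)) = Real.log ((j:ℝ)+1) - Real.log ((j:ℝ)+1-ρ) :=
    Real.log_div (ne_of_gt ht) (ne_of_gt htρ)
  have l2 : Real.log ((j:ℝ) / ((j:ℝ)+1)) = Real.log (j:ℝ) - Real.log ((j:ℝ)+1) :=
    Real.log_div (ne_of_gt hj') (ne_of_gt ht)
  have l3 : Real.log (((j:ℝ)+1-ρ) / ((j:ℝ)+1)) = Real.log ((j:ℝ)+1-ρ) - Real.log ((j:ℝ)+1) :=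
    Real.log_div (ne_of_gt htρ) (ne_of_gt ht)
  rw [dF, eL, eL, e1, e2, l1, l2, l3]
  field_simp
  ring

lemma quot_tendsto : Tendsto (fun j : ℕ => ((j:ℝ)+2) / ((j:ℝ)+1)) atTop (𝓝 1) := by
  have h2 : Tendsto (fun j : ℕ => 1 + 1 / ((j:ℝ)+1)) atTop (𝓝 (1 + 0)) :=
    Tendsto.const_add 1 tendsto_one_div_add_atTop_nhds_zero_nat
  rw [add_zero] at h2
  apply h2.congr
  intro j
  have : ((j:ℝ)+1) ≠ 0 := by positivity
  field_simp
  ring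

lemma quot2_tendsto : Tendsto (fun j : ℕ => ((j:ℝ)+2) / ((j:ℝ)+1)^2) atTop (𝓝 0) := by
  have h := tendsto_one_div_add_atTop_nhds_zero_nat.mul quot_tendsto
  rw [zero_mul] at h
  apply h.congr
  intro j
  rw [div_mul_div_comm, one_mul, ← pow_two]


lemma dF_mul_tendsto {ρ : ℝ} (hρ : ρ < 0) :
    Tendsto (fun j : ℕ => ((j:ℝ)+1) * ((j:ℝ)+2) * dF ρ j) atTop (𝓝 ((ρ^2 - ρ)/2)) := by
  have hmain : Tendsto (fun j : ℕ => (ρ^2 - ρ)/2 * (((j:ℝ)+2) / ((j:ℝ)+1))) atTop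
      (𝓝 ((ρ^2 - ρ)/2)) := by
    simpa using quot_tendsto.const_mul ((ρ^2 - ρ)/2)
  have hgz : Tendsto (fun j : ℕ => (2*|ρ|^3 + 2*|ρ|) * (((j:ℝ)+2) / ((j:ℝ)+1)^2)) atTop
      (𝓝 0) := by
    simpa using quot2_tendsto.const_mul (2*|ρ|^3 + 2*|ρ|)
  have hbound : ∀ᶠ j : ℕ in atTop,
      ‖((j:ℝ)+1) * ((j:ℝ)+2) * (- eL (ρ / ((j:ℝ)+1)) + ρ * eL (1 / ((j:ℝ)+1)))‖
        ≤ (2*|ρ|^3 + 2*|ρ|) * (((j:ℝ)+2) / ((j:ℝ)+1)^2) := by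
    filter_upwards [eventually_ge_atTop (max 1 (Nat.ceil (2 * |ρ|)))] with j hj
    have hj1 : 1 ≤ j := le_trans (le_max_left _ _) hj
    have hj2 : 2 * |ρ| ≤ (j:ℝ) := by
      have h := le_trans (le_max_right _ _) hj
      calc 2 * |ρ| ≤ (Nat.ceil (2*|ρ|) : ℝ) := Nat.le_ceil _
        _ ≤ (j:ℝ) := by exact_mod_cast h
    have ht : (0:ℝ) < (j:ℝ)+1 := by positivity
    have hj1' : (1:ℝ) ≤ (j:ℝ) := by exact_mod_cast hj1
    have hx : |ρ / ((j:ℝ)+1)| ≤ 1/2 := by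
      rw [abs_div, abs_of_pos ht, div_le_iff₀ ht]
      linarith [abs_nonneg ρ]
    have hy : |1 / ((j:ℝ)+1)| ≤ 1/2 := by
      rw [abs_div, abs_of_pos ht, div_le_iff₀ ht]
      rw [abs_one]
      linarith
    have b1 := eL_bound hx
    have b2 := eL_bound hy
    rw [abs_div, abs_of_pos ht, div_pow] at b1
    rw [abs_div, abs_of_pos ht, div_pow, abs_one, one_pow] at b2
    rw [Real.norm_eq_abs, abs_mul, abs_of_pos (by positivity : (0:ℝ) < ((j:ℝ)+1)*((j:ℝ)+2))]
    have hsum : |(- eL (ρ/((j:ℝ)+1)) + ρ * eL (1/((j:ℝ)+1)))|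
        ≤ 2 * (|ρ|^3 / ((j:ℝ)+1)^3) + |ρ| * (2 * (1 / ((j:ℝ)+1)^3)) := by
      calc |(- eL (ρ/((j:ℝ)+1)) + ρ * eL (1/((j:ℝ)+1)))|
          ≤ |(- eL (ρ/((j:ℝ)+1)))| + |ρ * eL (1/((j:ℝ)+1))| := abs_add_le _ _
        _ = |eL (ρ/((j:ℝ)+1))| + |ρ| * |eL (1/((j:ℝ)+1))| := by rw [abs_neg, abs_mul]
        _ ≤ 2 * (|ρ|^3 / ((j:ℝ)+1)^3) + |ρ| * (2 * (1 / ((j:ℝ)+1)^3)) := by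
            refine add_le_add ?_ (mul_le_mul_of_nonneg_left ?_ (abs_nonneg ρ))
            · simpa [div_pow] using b1
            · simpa [div_pow] using b2
    calc ((j:ℝ)+1)*((j:ℝ)+2) * |(- eL (ρ/((j:ℝ)+1)) + ρ * eL (1/((j:ℝ)+1)))|
        ≤ ((j:ℝ)+1)*((j:ℝ)+2) * (2 * (|ρ|^3 / ((j:ℝ)+1)^3) + |ρ| * (2 * (1 / ((j:ℝ)+1)^3))) :=
          mul_le_mul_of_nonneg_left hsum (by positivity)
      _ = (2*|ρ|^3 + 2*|ρ|) * (((j:ℝ)+2) / ((j:ℝ)+1)^2) := by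
          field_simp
  have herr : Tendsto (fun j : ℕ => ((j:ℝ)+1) * ((j:ℝ)+2) *
      (- eL (ρ / ((j:ℝ)+1)) + ρ * eL (1 / ((j:ℝ)+1)))) atTop (𝓝 0) :=
    squeeze_zero_norm' hbound hgz
  have hcomb := hmain.add herr
  rw [add_zero] at hcomb
  apply hcomb.congr'
  filter_upwards [eventually_ge_atTop 1] with j hj
  have ht : ((j:ℝ)+1) ≠ 0 := by positivity
  rw [dF_eq hρ hj]
  field_simp
  ring

noncomputable def qF (j : ℕ) : ℝ := 1 / (((j:ℝ)+1) * ((j:ℝ)+2))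

lemma qF_pos (j : ℕ) : 0 < qF j := by rw [qF]; positivity

lemma hasSum_qF (m : ℕ) : HasSum (fun i : ℕ => qF (m + i)) (1 / ((m:ℝ)+1)) := by
  rw [hasSum_iff_tendsto_nat_of_nonneg (fun i => (qF_pos (m+i)).le)]
  have hsum : ∀ N : ℕ, (∑ i ∈ Finset.range N, qF (m + i))
      = 1/((m:ℝ)+1) - 1/((m:ℝ)+(N:ℝ)+1) := by
    intro N
    have h := Finset.sum_range_sub' (f := fun i : ℕ => 1/((m:ℝ)+(i:ℝ)+1)) N
    simp only [Nat.cast_zero, add_zero] at h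
    rw [← h]
    apply Finset.sum_congr rfl
    intro i _
    have h1 : (0:ℝ) < (m:ℝ)+(i:ℝ)+1 := by positivity
    have h2 : (0:ℝ) < (m:ℝ)+(i:ℝ)+2 := by positivity
    rw [qF]
    push_cast
    rw [div_sub_div _ _ (ne_of_gt h1) (ne_of_gt (by linarith : (0:ℝ) < (m:ℝ)+((i:ℝ)+1)+1))]
    rw [div_eq_div_iff (by positivity) (by positivity)]
    push_cast
    ring
  simp only [hsum]
  have h3 : Tendsto (fun N : ℕ => 1/((m:ℝ)+(N:ℝ)+1)) atTop (𝓝 0) := by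
    simp only [one_div]
    apply tendsto_inv_atTop_zero.comp
    apply tendsto_atTop_add_const_right
    exact tendsto_atTop_add_const_left _ _ tendsto_natCast_atTop_atTop
  simpa using (tendsto_const_nhds (x := 1/((m:ℝ)+1))).sub h3

lemma summable_dF {ρ : ℝ} (hρ : ρ < 0) : Summable (dF ρ) := by
  apply Summable.of_norm_bounded_eventually_nat
    (g := fun j => (|(ρ^2-ρ)/2| + 1) * qF j)
  · exact ((hasSum_qF 0).summable.congr (by intro i; simp)).mul_left _
  · have h := (dF_mul_tendsto hρ).eventually (eventually_abs_sub_lt _ one_pos)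
    filter_upwards [h] with j hj
    have hq : 0 < ((j:ℝ)+1) * ((j:ℝ)+2) := by positivity
    rw [Real.norm_eq_abs]
    have h4 := abs_sub_abs_le_abs_sub (((j:ℝ)+1) * ((j:ℝ)+2) * dF ρ j) ((ρ^2-ρ)/2)
    have h5 : |((j:ℝ)+1) * ((j:ℝ)+2) * dF ρ j| ≤ |(ρ^2-ρ)/2| + 1 := by linarith
    have h6 : |dF ρ j| * (((j:ℝ)+1) * ((j:ℝ)+2)) ≤ |(ρ^2-ρ)/2| + 1 := by
      calc |dF ρ j| * (((j:ℝ)+1) * ((j:ℝ)+2))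
          = |((j:ℝ)+1) * ((j:ℝ)+2) * dF ρ j| := by rw [abs_mul, abs_of_pos hq]; ring
        _ ≤ |(ρ^2-ρ)/2| + 1 := h5
    calc |dF ρ j| = (|dF ρ j| * (((j:ℝ)+1) * ((j:ℝ)+2))) * qF j := by
          rw [qF]; field_simp
      _ ≤ (|(ρ^2-ρ)/2| + 1) * qF j :=
          mul_le_mul_of_nonneg_right h6 (qF_pos j).le

lemma hasSum_dF_tail {ρ : ℝ} (hρ : ρ < 0) {m : ℕ} (hm : 1 ≤ m) :
    HasSum (fun i : ℕ => dF ρ (m + i)) (- Real.log (aF ρ m)) := by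
  have hsummable : Summable (fun i : ℕ => dF ρ (m + i)) := by
    have h := (summable_nat_add_iff (f := dF ρ) m).2 (summable_dF hρ)
    exact h.congr (fun i => by rw [add_comm])
  rw [hsummable.hasSum_iff_tendsto_nat]
  have hsum : ∀ N : ℕ, (∑ i ∈ Finset.range N, dF ρ (m + i))
      = Real.log (aF ρ (m + N)) - Real.log (aF ρ m) := by
    intro N
    have h := Finset.sum_range_sub (f := fun i : ℕ => Real.log (aF ρ (m + i))) N
    simp only [Nat.add_zero] at h
    rw [← h]
    apply Finset.sum_congr rfl
    intro i _
    have hmi : m + (i+1) = (m + i) + 1 := by omega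
    rw [hmi, log_aF_succ hρ (le_trans hm (Nat.le_add_right m i))]
    ring
  simp only [hsum]
  have h1 : Tendsto (fun N : ℕ => Real.log (aF ρ (m + N))) atTop (𝓝 0) := by
    apply (log_aF_tendsto_zero hρ).comp
    exact tendsto_add_atTop_nat m |>.congr (fun n => by omega) |>.comp tendsto_id
  simpa using h1.sub (tendsto_const_nhds (x := Real.log (aF ρ m)))

lemma succ_mul_log_aF_tendsto {ρ : ℝ} (hρ : ρ < 0) :
    Tendsto (fun m : ℕ => ((m:ℝ)+1) * Real.log (aF ρ m)) atTop (𝓝 (-((ρ^2-ρ)/2))) := by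
  set c := (ρ^2-ρ)/2 with hc
  rw [Metric.tendsto_atTop]
  intro ε hε
  obtain ⟨N₁, hN₁⟩ := Metric.tendsto_atTop.1 (dF_mul_tendsto hρ) (ε/2) (by linarith)
  refine ⟨max N₁ 1, fun m hm => ?_⟩
  have hm1 : 1 ≤ m := le_trans (le_max_right _ _) hm
  have hmN : N₁ ≤ m := le_trans (le_max_left _ _) hm
  have hm' : (0:ℝ) < (m:ℝ)+1 := by positivity
  have htail := hasSum_dF_tail hρ hm1
  have hq := hasSum_qF m
  have hsummable : Summable (fun i : ℕ => dF ρ (m + i)) := htail.summable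
  have hqs : Summable (fun i : ℕ => qF (m + i)) := hq.summable
  -- pointwise bound
  have hptwise : ∀ i : ℕ, |c * qF (m+i) - dF ρ (m+i)| ≤ (ε/2) * qF (m+i) := by
    intro i
    have hj := hN₁ (m+i) (le_trans hmN (Nat.le_add_right m i))
    rw [Real.dist_eq] at hj
    have hqmul : qF (m+i) * ((((m+i:ℕ):ℝ)+1) * (((m+i:ℕ):ℝ)+2)) = 1 := by
      rw [qF]; field_simp
    have hkey : c * qF (m+i) - dF ρ (m+i)
        = -(((((m+i:ℕ):ℝ)+1) * (((m+i:ℕ):ℝ)+2) * dF ρ (m+i)) - c) * qF (m+i) := by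
      have h2 : dF ρ (m+i) = (((((m+i:ℕ):ℝ)+1) * (((m+i:ℕ):ℝ)+2)) * dF ρ (m+i)) * qF (m+i) := by
        linear_combination (-(dF ρ (m+i))) * hqmul
      nlinarith [h2]
    rw [hkey, abs_mul, abs_neg, abs_of_pos (qF_pos (m+i))]
    exact mul_le_mul_of_nonneg_right (le_of_lt hj) (qF_pos (m+i)).le
  -- tsum bound
  have hsub : Summable (fun i : ℕ => c * qF (m+i) - dF ρ (m+i)) :=
    (hqs.mul_left c).sub hsummable
  have htsum_bound : |∑' i, (c * qF (m+i) - dF ρ (m+i))| ≤ (ε/2) * (1/((m:ℝ)+1)) := by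
    have h1 : |∑' i, (c * qF (m+i) - dF ρ (m+i))| ≤ ∑' i, |c * qF (m+i) - dF ρ (m+i)| := by
      simpa using norm_tsum_le_tsum_norm (f := fun i => c * qF (m+i) - dF ρ (m+i)) hsub.abs
    refine h1.trans ?_
    have h2 := (hq.mul_left (ε/2)).tsum_eq
    rw [← h2]
    exact Summable.tsum_le_tsum hptwise hsub.abs (hqs.mul_left (ε/2))
  have hL : Real.log (aF ρ m) = - ∑' i, dF ρ (m+i) := by
    have := htail.tsum_eq
    linarith [this]
  have hcq : c * (1/((m:ℝ)+1)) = ∑' i, c * qF (m+i) := ((hq.mul_left c).tsum_eq).symm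
  have hdiff : ((m:ℝ)+1) * Real.log (aF ρ m) - (-c)
      = ((m:ℝ)+1) * (∑' i, (c * qF (m+i) - dF ρ (m+i))) := by
    rw [Summable.tsum_sub (hqs.mul_left c) hsummable, ← hcq, hL]
    field_simp
    ring
  rw [Real.dist_eq, hdiff, abs_mul, abs_of_pos hm']
  calc ((m:ℝ)+1) * |∑' i, (c * qF (m+i) - dF ρ (m+i))|
      ≤ ((m:ℝ)+1) * ((ε/2) * (1/((m:ℝ)+1))) := mul_le_mul_of_nonneg_left htsum_bound hm'.le
    _ = ε/2 := by field_simp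
    _ < ε := by linarith

lemma mul_log_aF_tendsto {ρ : ℝ} (hρ : ρ < 0) :
    Tendsto (fun m : ℕ => (m:ℝ) * Real.log (aF ρ m)) atTop (𝓝 (-((ρ^2-ρ)/2))) := by
  have h := (succ_mul_log_aF_tendsto hρ).sub (log_aF_tendsto_zero hρ)
  rw [sub_zero] at h
  apply h.congr
  intro m
  ring

lemma gFun_eq_aF {ρ : ℝ} (hρ : ρ < 0) {k n : ℕ} (hk : 1 ≤ k) (hn : 1 ≤ n) :
    gFun k n ρ = aF ρ n / aF ρ k := by
  have hk' : (0:ℝ) < k := by exact_mod_cast hk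
  have hn' : (0:ℝ) < n := by exact_mod_cast hn
  have hdiv : ((k:ℝ)/n) ^ ρ = (k:ℝ) ^ ρ / (n:ℝ) ^ ρ := Real.div_rpow hk'.le hn'.le ρ
  have hGk : Real.Gamma ((k:ℝ) + 1) ≠ 0 := ne_of_gt (Real.Gamma_pos_of_pos (by linarith))
  have hGn : Real.Gamma ((n:ℝ) + 1) ≠ 0 := ne_of_gt (Real.Gamma_pos_of_pos (by linarith))
  have hGkρ : Real.Gamma ((k:ℝ) - ρ + 1) ≠ 0 := ne_of_gt (Real.Gamma_pos_of_pos (by linarith))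
  have hGnρ : Real.Gamma ((n:ℝ) - ρ + 1) ≠ 0 := ne_of_gt (Real.Gamma_pos_of_pos (by linarith))
  have hkρ : ((k:ℝ)) ^ ρ ≠ 0 := ne_of_gt (Real.rpow_pos_of_pos hk' ρ)
  have hnρ : ((n:ℝ)) ^ ρ ≠ 0 := ne_of_gt (Real.rpow_pos_of_pos hn' ρ)
  rw [gFun, aF, aF, hdiv]
  field_simp


end GVarAux

open GVarAux in
/-- For `ρ < 0` and an intermediate sequence `k = k(n)` (`k → ∞`,
`k/n → 0`), `g(k,n,2ρ) - g(k,n,ρ)² = ρ²/k + o(1/k)` as `n → ∞`. -/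
theorem gFun_variance_expansion (ρ : ℝ) (hρ : ρ < 0) (k : ℕ → ℕ)
    (hk : Tendsto k atTop atTop)
    (hkn : Tendsto (fun n : ℕ => (k n : ℝ) / n) atTop (nhds 0)) :
    (fun n : ℕ => gFun (k n) n (2 * ρ) - (gFun (k n) n ρ) ^ 2 - ρ ^ 2 / (k n : ℝ))
      =o[atTop] fun n : ℕ => (1 : ℝ) / (k n : ℝ) := by
  have hρ2 : 2 * ρ < 0 := by linarith
  have hk' : Tendsto (fun n : ℕ => ((k n : ℕ) : ℝ)) atTop atTop :=
    tendsto_natCast_atTop_atTop.comp hk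
  have hkev : ∀ᶠ n : ℕ in atTop, 1 ≤ k n := hk.eventually (eventually_ge_atTop 1)
  have hnev : ∀ᶠ n : ℕ in atTop, 1 ≤ n := eventually_ge_atTop 1
  -- notation
  set L : ℝ → ℕ → ℝ := fun σ m => Real.log (aF σ m) with hL
  set u : ℕ → ℝ := fun n => L (2*ρ) n - L (2*ρ) (k n) with hu
  set v : ℕ → ℝ := fun n => 2 * (L ρ n - L ρ (k n)) with hv
  set c₁ : ℝ := (ρ^2 - ρ)/2 with hc₁
  set c₂ : ℝ := ((2*ρ)^2 - 2*ρ)/2 with hc₂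
  -- limits of k·L at k and at n
  have Mk2 : Tendsto (fun n : ℕ => (k n : ℝ) * L (2*ρ) (k n)) atTop (𝓝 (-c₂)) :=
    (mul_log_aF_tendsto hρ2).comp hk
  have Mk1 : Tendsto (fun n : ℕ => (k n : ℝ) * L ρ (k n)) atTop (𝓝 (-c₁)) :=
    (mul_log_aF_tendsto hρ).comp hk
  have Mn2 : Tendsto (fun n : ℕ => (k n : ℝ) * L (2*ρ) n) atTop (𝓝 0) := by
    have h := hkn.mul (mul_log_aF_tendsto hρ2)
    rw [zero_mul] at h
    apply h.congr'
    filter_upwards [hnev] with n hn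
    have : ((n:ℕ):ℝ) ≠ 0 := by positivity
    field_simp
    ring
  have Mn1 : Tendsto (fun n : ℕ => (k n : ℝ) * L ρ n) atTop (𝓝 0) := by
    have h := hkn.mul (mul_log_aF_tendsto hρ)
    rw [zero_mul] at h
    apply h.congr'
    filter_upwards [hnev] with n hn
    have : ((n:ℕ):ℝ) ≠ 0 := by positivity
    field_simp
    ring
  have hku : Tendsto (fun n : ℕ => (k n : ℝ) * u n) atTop (𝓝 c₂) := by
    have h := Mn2.sub Mk2
    rw [zero_sub, neg_neg] at h
    apply h.congr
    intro n
    simp only [hu]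
    ring
  have hkv : Tendsto (fun n : ℕ => (k n : ℝ) * v n) atTop (𝓝 (2*c₁)) := by
    have h := Mn1.sub Mk1
    rw [zero_sub, neg_neg] at h
    have h2 := h.const_mul 2
    apply h2.congr
    intro n
    simp only [hv]
    ring
  have hinvk : Tendsto (fun n : ℕ => 1 / (k n : ℝ)) atTop (𝓝 0) := by
    simp only [one_div]
    exact tendsto_inv_atTop_zero.comp hk'
  have hu0 : Tendsto u atTop (𝓝 0) := by
    have h := hku.mul hinvk
    rw [mul_zero] at h
    apply h.congr'
    filter_upwards [hkev] with n hn
    have : ((k n : ℕ):ℝ) ≠ 0 := by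
      have : (0:ℝ) < (k n : ℝ) := by exact_mod_cast hn
      positivity
    field_simp
  have hv0 : Tendsto v atTop (𝓝 0) := by
    have h := hkv.mul hinvk
    rw [mul_zero] at h
    apply h.congr'
    filter_upwards [hkev] with n hn
    have : ((k n : ℕ):ℝ) ≠ 0 := by
      have : (0:ℝ) < (k n : ℝ) := by exact_mod_cast hn
      positivity
    field_simp
  -- quadratic error terms
  have T1 : Tendsto (fun n : ℕ => (k n : ℝ) * (Real.exp (u n) - 1 - u n)) atTop (𝓝 0) := by
    apply squeeze_zero_norm' (a := fun n => |(k n : ℝ) * u n * u n|)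
    · filter_upwards [hu0.eventually (eventually_abs_sub_lt 0 one_pos)] with n hn
      rw [sub_zero] at hn
      have hb := Real.abs_exp_sub_one_sub_id_le hn.le
      have hknn : (0:ℝ) ≤ (k n : ℝ) := Nat.cast_nonneg _
      rw [Real.norm_eq_abs, abs_mul, abs_of_nonneg hknn]
      calc (k n : ℝ) * |Real.exp (u n) - 1 - u n| ≤ (k n : ℝ) * (u n)^2 :=
            mul_le_mul_of_nonneg_left hb hknn
        _ = |(k n : ℝ) * u n * u n| := by
            rw [abs_of_nonneg (by nlinarith [sq_nonneg (u n)] : (0:ℝ) ≤ (k n:ℝ) * u n * u n)]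
            ring
    · have h := (hku.mul hu0).abs
      rw [mul_zero, abs_zero] at h
      exact h
  have T2 : Tendsto (fun n : ℕ => (k n : ℝ) * (Real.exp (v n) - 1 - v n)) atTop (𝓝 0) := by
    apply squeeze_zero_norm' (a := fun n => |(k n : ℝ) * v n * v n|)
    · filter_upwards [hv0.eventually (eventually_abs_sub_lt 0 one_pos)] with n hn
      rw [sub_zero] at hn
      have hb := Real.abs_exp_sub_one_sub_id_le hn.le
      have hknn : (0:ℝ) ≤ (k n : ℝ) := Nat.cast_nonneg _
      rw [Real.norm_eq_abs, abs_mul, abs_of_nonneg hknn]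
      calc (k n : ℝ) * |Real.exp (v n) - 1 - v n| ≤ (k n : ℝ) * (v n)^2 :=
            mul_le_mul_of_nonneg_left hb hknn
        _ = |(k n : ℝ) * v n * v n| := by
            rw [abs_of_nonneg (by nlinarith [sq_nonneg (v n)] : (0:ℝ) ≤ (k n:ℝ) * v n * v n)]
            ring
    · have h := (hkv.mul hv0).abs
      rw [mul_zero, abs_zero] at h
      exact h
  -- main tendsto
  have hFmain : Tendsto (fun n : ℕ => (k n : ℝ) *
      (gFun (k n) n (2 * ρ) - (gFun (k n) n ρ) ^ 2 - ρ ^ 2 / (k n : ℝ))) atTop (𝓝 0) := by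
    have hG := ((T1.sub T2).add (hku.sub hkv)).sub_const (ρ^2)
    have hval : (0 - 0 + (c₂ - 2*c₁)) - ρ^2 = 0 := by
      rw [hc₁, hc₂]; ring
    rw [hval] at hG
    apply hG.congr'
    filter_upwards [hkev, hnev] with n hkn1 hn1
    have hkpos : (0:ℝ) < (k n : ℝ) := by exact_mod_cast hkn1
    have hg2 : gFun (k n) n (2*ρ) = Real.exp (u n) := by
      rw [gFun_eq_aF hρ2 hkn1 hn1, hu]
      rw [← Real.exp_log (aF_pos hρ2 hn1), ← Real.exp_log (aF_pos hρ2 hkn1), ← Real.exp_sub]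
    have hg1 : (gFun (k n) n ρ)^2 = Real.exp (v n) := by
      rw [gFun_eq_aF hρ hkn1 hn1, hv]
      rw [← Real.exp_log (aF_pos hρ hn1), ← Real.exp_log (aF_pos hρ hkn1), ← Real.exp_sub,
        ← Real.exp_nat_mul]
      norm_num
      rfl
    rw [hg2, hg1]
    have hkρ2 : (k n : ℝ) * (ρ^2 / (k n : ℝ)) = ρ^2 := by field_simp
    calc (k n:ℝ) * (Real.exp (u n) - 1 - u n) - (k n:ℝ) * (Real.exp (v n) - 1 - v n)
          + ((k n:ℝ) * u n - (k n:ℝ) * v n) - ρ^2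
        = (k n:ℝ) * (Real.exp (u n) - Real.exp (v n)) - (k n:ℝ) * (ρ^2 / (k n : ℝ)) := by
          rw [hkρ2]; ring
      _ = (k n:ℝ) * (Real.exp (u n) - Real.exp (v n) - ρ^2 / (k n:ℝ)) := by ring
  -- conclude littleO
  rw [isLittleO_iff]
  intro ε hε
  filter_upwards [hFmain.eventually (eventually_abs_sub_lt 0 hε), hkev] with n h1 h2
  rw [sub_zero] at h1
  have hkpos : (0:ℝ) < (k n : ℝ) := by exact_mod_cast h2
  rw [Real.norm_eq_abs, Real.norm_eq_abs, abs_mul] at *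
  rw [abs_of_pos hkpos] at h1
  have : |gFun (k n) n (2 * ρ) - gFun (k n) n ρ ^ 2 - ρ ^ 2 / (k n:ℝ)| ≤ ε / (k n : ℝ) := by
    rw [le_div_iff₀ hkpos]
    calc |gFun (k n) n (2 * ρ) - gFun (k n) n ρ ^ 2 - ρ ^ 2 / (k n:ℝ)| * (k n : ℝ)
        = (k n:ℝ) * |gFun (k n) n (2 * ρ) - gFun (k n) n ρ ^ 2 - ρ ^ 2 / (k n:ℝ)| := by ring
      _ ≤ ε := h1.le
  calc |gFun (k n) n (2 * ρ) - gFun (k n) n ρ ^ 2 - ρ ^ 2 / (k n:ℝ)| ≤ ε / (k n : ℝ) := this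
    _ = ε * |1 / (k n : ℝ)| := by
        rw [abs_of_pos (by positivity : (0:ℝ) < 1 / (k n:ℝ))]
        ring
end
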